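/- arXiv:2108.07957 — 3 statements merged into one kernel-verified Lean document; each statement's English description precedes it below -/
import Mathlib

section
/- Let V be a finite-dimensional ℚ-vector space and ψ : V → V a ℚ-linear map whose characteristic polynomial f has distinct complex roots (f is separable). Let K ⊆ ℂ be the splitting field of f over ℚ and assume Gal(K/ℚ) acts transitively on the set of complex roots of f. Suppose ℂ ⊗[ℚ] V = U ⊕ U′ is an internal direct sum of two ℂ-subspaces, each invariant under the base-changed endomorphism ψ_ℂ of ℂ ⊗[ℚ] V, with U ≠ 0. Then every ψ-invariant ℚ-subspace W ⊆ V whose canonical image in ℂ ⊗[ℚ] V is contained in U′ is the zero subspace. -/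
set_option synthInstance.maxHeartbeats 1000000
set_option maxHeartbeats 1000000

open Polynomial IntermediateField
open scoped TensorProduct

/-- Galois-theoretic engine of the proof of Lemma 1: if the Galois group of
the characteristic polynomial of `ψ` acts transitively on its (distinct) complex roots, and
`ℂ ⊗[ℚ] V = U ⊕ U′` with both summands invariant under `ψ_ℂ` and `U ≠ 0`, then any
`ψ`-invariant rational subspace `W ⊆ V` whose complexification lies in `U′` is zero. -/
theorem invariant_subspace_in_complement_is_zero
    (V : Type*) [AddCommGroup V] [Module ℚ V] [FiniteDimensional ℚ V]
    (ψ : V →ₗ[ℚ] V)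
    -- the characteristic polynomial has distinct complex roots
    (hnodup : ((ψ.charpoly.map (algebraMap ℚ ℂ)).roots).Nodup)
    -- `Gal(K/ℚ)` acts transitively on the set of complex roots, where `K ⊆ ℂ` is the
    -- splitting field of the characteristic polynomial
    (hgal : ∀ a : ℂ, ∀ ha : a ∈ ψ.charpoly.rootSet ℂ, ∀ b ∈ ψ.charpoly.rootSet ℂ,
      ∃ σ : (adjoin ℚ (ψ.charpoly.rootSet ℂ)) ≃ₐ[ℚ] (adjoin ℚ (ψ.charpoly.rootSet ℂ)),
        (σ ⟨a, subset_adjoin ℚ _ ha⟩ : ℂ) = b)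
    -- `ℂ ⊗[ℚ] V = U ⊕ U′`, both invariant under the base change of `ψ`
    (U U' : Submodule ℂ (ℂ ⊗[ℚ] V))
    (hcompl : IsCompl U U')
    (hinvU : ∀ x ∈ U, LinearMap.baseChange ℂ ψ x ∈ U)
    (hinvU' : ∀ x ∈ U', LinearMap.baseChange ℂ ψ x ∈ U')
    (hU : U ≠ ⊥) :
    ∀ W : Submodule ℚ V, (∀ w ∈ W, ψ w ∈ W) →
      (∀ w ∈ W, (1 : ℂ) ⊗ₜ[ℚ] w ∈ U') → W = ⊥ := by
  intro W hW hWU'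
  by_contra hWne
  haveI hWnt : Nontrivial W := Submodule.nontrivial_iff_ne_bot.mpr hWne
  set f := ψ.charpoly with hf
  set φ := ψ.restrict hW with hφ
  set g := minpoly ℚ φ with hg
  -- pow intertwining
  have hpow : ∀ (n : ℕ) (w : W), (((φ ^ n) w : W) : V) = (ψ ^ n) (w : V) := by
    intro n
    induction n with
    | zero => intro w; simp
    | succ n ih =>
      intro w
      rw [pow_succ, pow_succ]
      simp only [Module.End.mul_apply]
      rw [ih (φ w)]
      rfl
  have hint : ∀ (p : ℚ[X]) (w : W), (((aeval φ p) w : W) : V) = (aeval ψ p) (w : V) := by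
    intro p
    induction p using Polynomial.induction_on' with
    | add p q hp hq =>
      intro w
      simp only [map_add, LinearMap.add_apply, Submodule.coe_add, hp w, hq w]
    | monomial n c =>
      intro w
      simp only [aeval_monomial, Module.End.mul_apply, Module.algebraMap_end_apply,
        Submodule.coe_smul, hpow n w]
  have hφint : IsIntegral ℚ φ := LinearMap.isIntegral φ
  -- g divides f
  have haevalmin : aeval φ (minpoly ℚ ψ) = 0 := by
    refine LinearMap.ext fun w => Subtype.ext ?_
    show (((aeval φ (minpoly ℚ ψ)) w : W) : V) = (0 : V)
    rw [hint, minpoly.aeval, LinearMap.zero_apply]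
  have hgdvd : g ∣ f := (minpoly.dvd ℚ φ haevalmin).trans (LinearMap.minpoly_dvd_charpoly ψ)
  -- a root of g in ℂ
  have hgdeg : 0 < g.natDegree := minpoly.natDegree_pos hφint
  have hgne : g ≠ 0 := minpoly.ne_zero hφint
  have hgmapne : g.map (algebraMap ℚ ℂ) ≠ 0 :=
    (Polynomial.map_ne_zero_iff (algebraMap ℚ ℂ).injective).mpr hgne
  obtain ⟨a, ha⟩ := Complex.exists_root
    (show (0 : WithBot ℕ) < (g.map (algebraMap ℚ ℂ)).degree by
      rw [Polynomial.degree_map]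
      exact Polynomial.natDegree_pos_iff_degree_pos.mp hgdeg)
  have hag : aeval a g = 0 := by
    rwa [Polynomial.aeval_def, ← Polynomial.eval_map]
  have hfne : f ≠ 0 := (LinearMap.charpoly_monic ψ).ne_zero
  have haf : a ∈ f.rootSet ℂ := by
    rw [Polynomial.mem_rootSet]
    obtain ⟨h, hh⟩ := hgdvd
    exact ⟨hfne, by rw [hh, map_mul, hag, zero_mul]⟩
  -- every root of f is a root of g
  have hKroot : ∀ b ∈ f.rootSet ℂ, aeval b g = 0 := by
    intro b hb
    obtain ⟨σ, hσ⟩ := hgal a haf b hb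
    have hval := fun (y : adjoin ℚ (f.rootSet ℂ)) =>
      Polynomial.aeval_algHom_apply (adjoin ℚ (f.rootSet ℂ)).val y g
    have h1 : aeval (⟨a, subset_adjoin ℚ _ haf⟩ : adjoin ℚ (f.rootSet ℂ)) g = 0 := by
      apply (adjoin ℚ (f.rootSet ℂ)).val.injective
      rw [map_zero]
      exact ((hval ⟨a, subset_adjoin ℚ _ haf⟩).symm.trans hag :)
    have h3 : aeval (σ ⟨a, subset_adjoin ℚ _ haf⟩) g = 0 := by
      have h2 := Polynomial.aeval_algHom_apply
        (σ : adjoin ℚ (f.rootSet ℂ) →ₐ[ℚ] adjoin ℚ (f.rootSet ℂ))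
        (⟨a, subset_adjoin ℚ _ haf⟩ : adjoin ℚ (f.rootSet ℂ)) g
      rw [h1, map_zero] at h2
      exact h2
    have h4 := hval (σ ⟨a, subset_adjoin ℚ _ haf⟩)
    rw [← hσ]
    exact h4.trans (by rw [h3, map_zero])
  -- multiset inclusion of roots
  have hsub : (f.map (algebraMap ℚ ℂ)).roots ⊆ (g.map (algebraMap ℚ ℂ)).roots := by
    intro c hc
    rw [Polynomial.mem_roots hgmapne]
    have hcf : c ∈ f.rootSet ℂ := by
      rw [Polynomial.mem_rootSet]
      refine ⟨hfne, ?_⟩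
      have := Polynomial.isRoot_of_mem_roots hc
      rwa [Polynomial.IsRoot, Polynomial.eval_map, ← Polynomial.aeval_def] at this
    have := hKroot c hcf
    rwa [Polynomial.IsRoot, Polynomial.eval_map, ← Polynomial.aeval_def]
  have hle : (f.map (algebraMap ℚ ℂ)).roots ≤ (g.map (algebraMap ℚ ℂ)).roots :=
    (Multiset.le_iff_subset hnodup).mpr hsub
  -- count degrees
  have hcardf : (f.map (algebraMap ℚ ℂ)).roots.card = f.natDegree :=
    IsAlgClosed.card_roots_map_eq_natDegree_of_injective f (algebraMap ℚ ℂ).injective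
  have hcardg : (g.map (algebraMap ℚ ℂ)).roots.card ≤ g.natDegree := by
    rw [← Polynomial.natDegree_map (algebraMap ℚ ℂ) (p := g)]
    exact Polynomial.card_roots' _
  have hdegfg : f.natDegree ≤ g.natDegree := by
    calc f.natDegree = (f.map (algebraMap ℚ ℂ)).roots.card := hcardf.symm
    _ ≤ (g.map (algebraMap ℚ ℂ)).roots.card := Multiset.card_le_card hle
    _ ≤ g.natDegree := hcardg
  have hgW : g.natDegree ≤ Module.finrank ℚ W := by
    have h5 : g ∣ φ.charpoly := LinearMap.minpoly_dvd_charpoly φ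
    calc g.natDegree ≤ φ.charpoly.natDegree :=
      Polynomial.natDegree_le_of_dvd h5 (LinearMap.charpoly_monic φ).ne_zero
    _ = Module.finrank ℚ W := LinearMap.charpoly_natDegree φ
  have hfV : f.natDegree = Module.finrank ℚ V := LinearMap.charpoly_natDegree ψ
  -- W = ⊤
  have hWtop : W = ⊤ := by
    apply Submodule.eq_top_of_finrank_eq
    have h6 : Module.finrank ℚ W ≤ Module.finrank ℚ V := Submodule.finrank_le W
    omega
  -- U' = ⊤
  have hU'top : U' = ⊤ := by
    rw [eq_top_iff]
    intro x _
    induction x using TensorProduct.induction_on with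
    | zero => exact U'.zero_mem
    | tmul c v =>
      have h7 : (c : ℂ) ⊗ₜ[ℚ] v = c • ((1 : ℂ) ⊗ₜ[ℚ] v) := by
        rw [TensorProduct.smul_tmul', smul_eq_mul, mul_one]
      rw [h7]
      exact U'.smul_mem c (hWU' v (hWtop ▸ Submodule.mem_top))
    | add x y hx hy => exact U'.add_mem (hx Submodule.mem_top) (hy Submodule.mem_top)
  have h8 : U = ⊥ := by
    have h9 := hcompl.inf_eq_bot
    rwa [hU'top, inf_top_eq] at h9
  exact hU h8
end

section
/- Let f ∈ ℚ[X] be a polynomial of degree m ≥ 4 with m distinct complex roots and f(0) ≠ 0. Let K ⊆ ℂ be the splitting field of f over ℚ and R ⊆ K its set of roots. Assume every permutation of R is induced by some element of Gal(K/ℚ). Then products of pairs of distinct roots determine the pair: for all a, b, c, d ∈ R with a ≠ b and c ≠ d, if a·b = c·d then {a, b} = {c, d}. -/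
open Polynomial IntermediateField

/-- claim in the proof of Lemma 1: for a polynomial `f ∈ ℚ[X]` of degree
`m ≥ 4` with `m` distinct complex roots, `f(0) ≠ 0`, and Galois group the full symmetric group
on the roots, products of pairs of distinct roots determine the pair. -/
theorem products_of_distinct_roots_determine_pair
    (f : Polynomial ℚ) (m : ℕ) (hm : 4 ≤ m) (hdeg : f.natDegree = m)
    -- `f` has `m` distinct complex roots
    (hnodup : ((f.map (algebraMap ℚ ℂ)).roots).Nodup)
    (hcard : ((f.map (algebraMap ℚ ℂ)).roots).card = m)
    -- `f(0) ≠ 0`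
    (h0 : f.eval 0 ≠ 0)
    -- every permutation of the root set is induced by an element of `Gal(K/ℚ)`, where
    -- `K ⊆ ℂ` is the splitting field of `f` over `ℚ`
    (hgal : ∀ π : Equiv.Perm (f.rootSet ℂ),
      ∃ σ : (adjoin ℚ (f.rootSet ℂ)) ≃ₐ[ℚ] (adjoin ℚ (f.rootSet ℂ)),
        ∀ r : f.rootSet ℂ, (σ ⟨r.1, subset_adjoin ℚ _ r.2⟩ : ℂ) = (π r : ℂ)) :
    ∀ a ∈ f.rootSet ℂ, ∀ b ∈ f.rootSet ℂ, ∀ c ∈ f.rootSet ℂ, ∀ d ∈ f.rootSet ℂ,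
      a ≠ b → c ≠ d → a * b = c * d → ({a, b} : Set ℂ) = {c, d} := by
  classical
  intro a ha b hb c hc d hd hab hcd hmul
  -- roots are nonzero
  have hne0 : ∀ x ∈ f.rootSet ℂ, x ≠ 0 := by
    intro x hx hx0
    rw [Polynomial.mem_rootSet] at hx
    apply h0
    have h2 := hx.2
    rw [hx0, Polynomial.aeval_def, Polynomial.eval₂_at_zero,
      _root_.map_eq_zero, Polynomial.coeff_zero_eq_eval_zero] at h2
    exact h2
  -- key: every permutation of the roots preserves the relation `a*b = c*d`
  have key : ∀ π : Equiv.Perm (f.rootSet ℂ),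
      (π ⟨a, ha⟩ : ℂ) * (π ⟨b, hb⟩ : ℂ) = (π ⟨c, hc⟩ : ℂ) * (π ⟨d, hd⟩ : ℂ) := by
    intro π
    obtain ⟨σ, hσ⟩ := hgal π
    have h1 : (⟨a, subset_adjoin ℚ _ ha⟩ : adjoin ℚ (f.rootSet ℂ)) *
        ⟨b, subset_adjoin ℚ _ hb⟩ =
        (⟨c, subset_adjoin ℚ _ hc⟩ : adjoin ℚ (f.rootSet ℂ)) *
        ⟨d, subset_adjoin ℚ _ hd⟩ := by
      apply Subtype.ext
      push_cast
      exact hmul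
    have h2 := congrArg σ h1
    rw [map_mul, map_mul] at h2
    have h3 := congrArg (Subtype.val) h2
    push_cast at h3
    rwa [hσ ⟨a, ha⟩, hσ ⟨b, hb⟩, hσ ⟨c, hc⟩, hσ ⟨d, hd⟩] at h3
  by_cases hac : a = c
  · have hbd' : b = d := mul_left_cancel₀ (hne0 a ha) (by rw [hmul, hac])
    rw [hac, hbd']
  by_cases had : a = d
  · have hbc' : b = c := by
      apply mul_left_cancel₀ (hne0 a ha)
      rw [hmul, had, mul_comm]
    rw [had, hbc', Set.pair_comm]
  by_cases hbc : b = c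
  · have had' : a = d := by
      apply mul_right_cancel₀ (hne0 b hb)
      rw [hmul, hbc, mul_comm]
    rw [hbc, had', Set.pair_comm]
  by_cases hbd : b = d
  · have hac' : a = c := by
      apply mul_right_cancel₀ (hne0 b hb)
      rw [hmul, hbd]
    rw [hbd, hac']
  -- now a, b, c, d are pairwise distinct; derive a contradiction
  exfalso
  -- subtype versions of distinctness
  have sab : (⟨a, ha⟩ : f.rootSet ℂ) ≠ ⟨b, hb⟩ := fun h => hab (congrArg Subtype.val h)
  have sac : (⟨a, ha⟩ : f.rootSet ℂ) ≠ ⟨c, hc⟩ := fun h => hac (congrArg Subtype.val h)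
  have sad : (⟨a, ha⟩ : f.rootSet ℂ) ≠ ⟨d, hd⟩ := fun h => had (congrArg Subtype.val h)
  have sbc : (⟨b, hb⟩ : f.rootSet ℂ) ≠ ⟨c, hc⟩ := fun h => hbc (congrArg Subtype.val h)
  have sbd : (⟨b, hb⟩ : f.rootSet ℂ) ≠ ⟨d, hd⟩ := fun h => hbd (congrArg Subtype.val h)
  have scd : (⟨c, hc⟩ : f.rootSet ℂ) ≠ ⟨d, hd⟩ := fun h => hcd (congrArg Subtype.val h)
  -- apply the transposition (b c)
  have eq1 : a * c = b * d := by
    have := key (Equiv.swap ⟨b, hb⟩ ⟨c, hc⟩)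
    rwa [Equiv.swap_apply_of_ne_of_ne sab sac, Equiv.swap_apply_left,
      Equiv.swap_apply_right, Equiv.swap_apply_of_ne_of_ne (Ne.symm sbd) (Ne.symm scd)]
      at this
  -- apply the transposition (b d)
  have eq2 : a * d = c * b := by
    have := key (Equiv.swap ⟨b, hb⟩ ⟨d, hd⟩)
    rwa [Equiv.swap_apply_of_ne_of_ne sab sad, Equiv.swap_apply_left,
      Equiv.swap_apply_of_ne_of_ne (Ne.symm sbc) scd, Equiv.swap_apply_right] at this
  -- from hmul and eq1 : a² = d²
  have h1 : (a - d) * (a + d) * (b * c) = 0 := by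
    linear_combination (a * c) * hmul + (c * d) * eq1
  have had2 : a = -d := by
    rcases mul_eq_zero.mp h1 with h | h
    · rcases mul_eq_zero.mp h with h' | h'
      · exact absurd (sub_eq_zero.mp h') had
      · exact eq_neg_of_add_eq_zero_left h'
    · rcases mul_eq_zero.mp h with h' | h'
      · exact absurd h' (hne0 b hb)
      · exact absurd h' (hne0 c hc)
  -- from hmul and eq2 : a² = c²
  have h2 : (a - c) * (a + c) * (b * d) = 0 := by
    linear_combination (a * d) * hmul + (c * d) * eq2
  have hac2 : a = -c := by
    rcases mul_eq_zero.mp h2 with h | h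
    · rcases mul_eq_zero.mp h with h' | h'
      · exact absurd (sub_eq_zero.mp h') hac
      · exact eq_neg_of_add_eq_zero_left h'
    · rcases mul_eq_zero.mp h with h' | h'
      · exact absurd h' (hne0 b hb)
      · exact absurd h' (hne0 d hd)
  exact hcd (neg_injective (hac2 ▸ had2 ▸ rfl))
end

section
/- Fix a natural number k and a finite index set I of pairs (p, q) of natural numbers with p + q = k. Let M be a ℂ-vector space which is the internal direct sum of subspaces M^{p,q} indexed by (p, q) ∈ I, with associated projections π^{p,q} : M → M^{p,q}. Let B ⊆ M be a ℂ-subspace such that for every z ∈ ℂ with z ≠ 0 and every b ∈ B, the element Σ_{(p,q)∈I} z^p · conj(z)^q · π^{p,q}(b) again lies in B. Then π^{p,q}(b) ∈ B for every b ∈ B and every (p, q) ∈ I; equivalently, B is the direct sum of its intersections B ∩ M^{p,q}. -/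
open scoped ComplexConjugate

lemma stable_subspace_splits_sep (p q p' q' : ℕ) (hk : p + q = p' + q') (hne : p ≠ p') :
    ∃ z : ℂ, z ≠ 0 ∧ z ^ p * conj z ^ q ≠ z ^ p' * conj z ^ q' := by
  set m : ℕ := p + q' + (p' + q) + 1 with hm
  have hm0 : m ≠ 0 := by omega
  have hprim := Complex.isPrimitiveRoot_exp m hm0
  set ζ : ℂ := Complex.exp (2 * Real.pi * Complex.I / m) with hζ
  have hζ0 : ζ ≠ 0 := Complex.exp_ne_zero _
  have hnorm : ‖ζ‖ = 1 := hprim.norm'_eq_one hm0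
  refine ⟨ζ, hζ0, fun h => ?_⟩
  rw [← Complex.inv_eq_conj hnorm] at h
  have h2 : ζ ^ (p + q') = ζ ^ (p' + q) := by
    rw [pow_add, pow_add]
    rw [inv_pow, inv_pow] at h
    have hq : ζ ^ q ≠ 0 := pow_ne_zero _ hζ0
    have hq' : ζ ^ q' ≠ 0 := pow_ne_zero _ hζ0
    calc ζ ^ p * ζ ^ q' = ζ ^ p * (ζ ^ q)⁻¹ * (ζ ^ q * ζ ^ q') := by
          rw [mul_assoc, ← mul_assoc (ζ ^ q)⁻¹, inv_mul_cancel₀ hq, one_mul]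
      _ = ζ ^ p' * (ζ ^ q')⁻¹ * (ζ ^ q * ζ ^ q') := by rw [h]
      _ = ζ ^ p' * ζ ^ q := by
          rw [mul_comm (ζ ^ q) (ζ ^ q'), mul_assoc, ← mul_assoc (ζ ^ q')⁻¹,
            inv_mul_cancel₀ hq', one_mul]
  have := hprim.pow_inj (by omega) (by omega) h2
  omega

/-- core of the proof of Deligne's lemma, Lemma 3: if `M` is the internal
direct sum of subspaces `M^{p,q}` (with `p + q = k`) with projections `π^{p,q}`, and a subspace
`B` is stable under all the operators `b ↦ Σ z^p conj(z)^q π^{p,q}(b)` for `z ≠ 0`, then `B`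
contains the components `π^{p,q}(b)` of all its elements, i.e. `B` is the direct sum of its
intersections with the `M^{p,q}`. -/
theorem stable_subspace_splits
    (k : ℕ) (I : Finset (ℕ × ℕ)) (hI : ∀ pq ∈ I, pq.1 + pq.2 = k)
    (M : Type*) [AddCommGroup M] [Module ℂ M]
    (Mpq : ℕ × ℕ → Submodule ℂ M) (π : ℕ × ℕ → M →ₗ[ℂ] M)
    -- `π^{p,q}` maps into `M^{p,q}`
    (hmem : ∀ pq ∈ I, ∀ x : M, π pq x ∈ Mpq pq)
    -- the projections sum to the identity
    (hsum : ∀ x : M, ∑ pq ∈ I, π pq x = x)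
    -- `π^{p,q}` is the identity on `M^{p,q}` ...
    (hid : ∀ pq ∈ I, ∀ x ∈ Mpq pq, π pq x = x)
    -- ... and kills the other summands
    (hzero : ∀ pq ∈ I, ∀ pq' ∈ I, pq ≠ pq' → ∀ x ∈ Mpq pq', π pq x = 0)
    (B : Submodule ℂ M)
    (hB : ∀ z : ℂ, z ≠ 0 → ∀ b ∈ B,
      ∑ pq ∈ I, (z ^ pq.1 * (conj z) ^ pq.2) • π pq b ∈ B) :
    (∀ b ∈ B, ∀ pq ∈ I, π pq b ∈ B) ∧ B = ⨆ pq ∈ I, B ⊓ Mpq pq := by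
  classical
  have key : ∀ n : ℕ, ∀ b ∈ B, (I.filter (fun pq => π pq b ≠ 0)).card ≤ n →
      ∀ pq ∈ I, π pq b ∈ B := by
    intro n
    induction n with
    | zero =>
      intro b hb hcard pq hpq
      have : π pq b = 0 := by
        by_contra h
        have : pq ∈ I.filter (fun pq => π pq b ≠ 0) := Finset.mem_filter.2 ⟨hpq, h⟩
        have := Finset.card_pos.2 ⟨pq, this⟩
        omega
      rw [this]; exact B.zero_mem
    | succ n ih =>
      intro b hb hcard pq₀ hpq₀
      by_cases htriv : ∀ pq ∈ I, pq ≠ pq₀ → π pq b = 0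
      · -- b itself is the pq₀ component
        have : π pq₀ b = b := by
          by_cases h0 : pq₀ ∈ I
          · calc π pq₀ b = ∑ pq ∈ I, π pq b := by
                  rw [Finset.sum_eq_single pq₀]
                  · intro pq hpq hne; exact htriv pq hpq hne
                  · intro h; exact absurd h0 h
                _ = b := hsum b
          · exact absurd hpq₀ h0
        rw [this]; exact hb
      · push_neg at htriv
        obtain ⟨pq₂, hpq₂, hne₂, hπ₂⟩ := htriv
        -- separate pq₀ and pq₂
        have hp : pq₀.1 ≠ pq₂.1 := by
          intro h
          have h1 := hI pq₀ hpq₀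
          have h2 := hI pq₂ hpq₂
          apply hne₂
          apply Prod.ext <;> omega
        obtain ⟨z, hz0, hzne⟩ := stable_subspace_splits_sep pq₀.1 pq₀.2 pq₂.1 pq₂.2
          (by rw [hI pq₀ hpq₀, hI pq₂ hpq₂]) hp
        set lam : ℕ × ℕ → ℂ := fun pq => z ^ pq.1 * (conj z) ^ pq.2 with hlam
        set c : M := (∑ pq ∈ I, lam pq • π pq b) - lam pq₂ • b with hc
        have hcB : c ∈ B := B.sub_mem (hB z hz0 b hb) (B.smul_mem _ hb)
        have hπc : ∀ pq ∈ I, π pq c = (lam pq - lam pq₂) • π pq b := by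
          intro pq hpq
          have h1 : π pq (∑ pq' ∈ I, lam pq' • π pq' b) = lam pq • π pq b := by
            rw [map_sum]
            rw [Finset.sum_eq_single pq]
            · rw [map_smul, hid pq hpq _ (hmem pq hpq b)]
            · intro pq' hpq' hne
              rw [map_smul, hzero pq hpq pq' hpq' (Ne.symm hne) _ (hmem pq' hpq' b),
                smul_zero]
            · intro h; exact absurd hpq h
          rw [hc, map_sub, h1, map_smul, sub_smul]
        have hsub : I.filter (fun pq => π pq c ≠ 0) ⊆
            (I.filter (fun pq => π pq b ≠ 0)).erase pq₂ := by
          intro pq hpq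
          rw [Finset.mem_filter] at hpq
          obtain ⟨hpqI, hpqne⟩ := hpq
          rw [Finset.mem_erase, Finset.mem_filter]
          have hπeq := hπc pq hpqI
          constructor
          · intro h; subst h
            apply hpqne
            rw [hπeq, sub_self, zero_smul]
          · refine ⟨hpqI, fun h => hpqne ?_⟩
            rw [hπeq, h, smul_zero]
        have hcardc : (I.filter (fun pq => π pq c ≠ 0)).card ≤ n := by
          have h1 := Finset.card_le_card hsub
          have h2 : pq₂ ∈ I.filter (fun pq => π pq b ≠ 0) := Finset.mem_filter.2 ⟨hpq₂, hπ₂⟩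
          have h3 := Finset.card_erase_of_mem h2
          omega
        have hπ₀c := ih c hcB hcardc pq₀ hpq₀
        rw [hπc pq₀ hpq₀] at hπ₀c
        have hne : lam pq₀ - lam pq₂ ≠ 0 := sub_ne_zero.2 hzne
        have := B.smul_mem (lam pq₀ - lam pq₂)⁻¹ hπ₀c
        rwa [smul_smul, inv_mul_cancel₀ hne, one_smul] at this
  have main : ∀ b ∈ B, ∀ pq ∈ I, π pq b ∈ B := fun b hb =>
    key (I.filter (fun pq => π pq b ≠ 0)).card b hb le_rfl
  refine ⟨main, le_antisymm ?_ ?_⟩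
  · intro b hb
    rw [← hsum b]
    refine Submodule.sum_mem _ fun pq hpq => ?_
    have : π pq b ∈ B ⊓ Mpq pq := ⟨main b hb pq hpq, hmem pq hpq b⟩
    exact Submodule.mem_iSup_of_mem pq (Submodule.mem_iSup_of_mem hpq this)
  · exact iSup_le fun pq => iSup_le fun _ => inf_le_left
end
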